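/- Let i ≤ j and k be integers. Then ∑_{t=i}^{j} h_{t−i}(α_{t−k}, α_{t−k+1}, …, α_i) · e_{j−t}(−α_{t−k+1}, …, −α_{j−1}) equals 1 if i = j and equals 0 if i < j. (Here the h-factor uses the list of α's with indices from t−k up to i, which is empty if t−k > i, and the e-factor uses the list of −α's with indices from t−k+1 up to j−1.) -/

import Mathlib

variable {R : Type*} [CommRing R]

/-- Elementary symmetric polynomial `e_m` of the entries of a list (zero for `m < 0`). -/
def esymL (l : List R) (m : ℤ) : R :=
  if 0 ≤ m then
    ∑ s ∈ Finset.powersetCard m.toNat (Finset.univ : Finset (Fin l.length)), ∏ i ∈ s, l.get i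
  else 0

/-- Complete homogeneous symmetric polynomial `h_m` of the entries of a list (zero for `m < 0`). -/
def hsymL (l : List R) (m : ℤ) : R :=
  if 0 ≤ m then
    ∑ s ∈ (Finset.univ : Finset (Fin l.length)).sym m.toNat, ((s.1).map l.get).prod
  else 0

/-- The list `f a, f (a+1), …, f b` (empty if `b < a`). -/
def intList (f : ℤ → R) (a b : ℤ) : List R :=
  (List.range (b + 1 - a).toNat).map (fun p => f (a + (p : ℤ)))

/-- `e_m(f a, …, f b)`. -/
def eI (f : ℤ → R) (a b m : ℤ) : R := esymL (intList f a b) m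

/-- `h_m(f a, …, f b)`. -/
def hI (f : ℤ → R) (a b m : ℤ) : R := hsymL (intList f a b) m

lemma esymL_neg (l : List R) {m : ℤ} (h : m < 0) : esymL l m = 0 := by
  simp [esymL, not_le.2 h]

lemma esymL_zero (l : List R) : esymL l 0 = 1 := by
  simp [esymL]

lemma esymL_eq_esymm (l : List R) (n : ℕ) : esymL l (n : ℤ) = Multiset.esymm (↑l) n := by
  rw [esymL, if_pos (by positivity), Int.toNat_natCast, ← Finset.esymm_map_val]
  congr 1
  have : (Finset.univ : Finset (Fin l.length)).val = ↑(List.finRange l.length) := by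
    rfl
  rw [this]
  rw [show ((List.finRange l.length : Multiset (Fin l.length))).map l.get
      = ↑((List.finRange l.length).map l.get) from rfl, List.map_get_finRange]

lemma esymm_cons (x : R) (s : Multiset R) (n : ℕ) :
    Multiset.esymm (x ::ₘ s) (n+1) = Multiset.esymm s (n+1) + x * Multiset.esymm s n := by
  rw [Multiset.esymm, Multiset.powersetCard_cons, Multiset.map_add, Multiset.sum_add,
    Multiset.map_map]
  congr 1
  rw [Multiset.esymm, ← Multiset.sum_map_mul_left]
  apply congrArg
  apply Multiset.map_congr rfl
  intro t _
  simp [Multiset.prod_cons]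

lemma esymL_cons (x : R) (l : List R) (m : ℤ) :
    esymL (x :: l) m = esymL l m + x * esymL l (m-1) := by
  rcases lt_trichotomy m 0 with h | h | h
  · rw [esymL_neg _ h, esymL_neg _ h, esymL_neg _ (by omega), mul_zero, add_zero]
  · subst h
    rw [esymL_zero, esymL_zero, esymL_neg _ (by omega), mul_zero, add_zero]
  · obtain ⟨n, rfl⟩ : ∃ n : ℕ, m = ((n+1 : ℕ) : ℤ) := ⟨(m-1).toNat, by omega⟩
    have h1 : ((n+1 : ℕ) : ℤ) - 1 = (n : ℤ) := by push_cast; ring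
    rw [h1, esymL_eq_esymm, esymL_eq_esymm, esymL_eq_esymm]
    rw [show ((x :: l : List R) : Multiset R) = x ::ₘ ↑l from rfl]
    exact esymm_cons x _ n

lemma esymL_gt (l : List R) {m : ℤ} (h : (l.length : ℤ) < m) : esymL l m = 0 := by
  induction l generalizing m with
  | nil =>
    simp at h
    rw [esymL, if_pos (by omega)]
    have : m.toNat ≠ 0 := by omega
    rw [show (Finset.univ : Finset (Fin ([] : List R).length)) = ∅ from rfl]
    rw [Finset.powersetCard_eq_empty.2 (by simp; omega)]
    simp
  | cons y t ih =>
    simp only [List.length_cons] at h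
    rw [esymL_cons, ih (by push_cast; omega), ih (by push_cast at h ⊢; omega), mul_zero, add_zero]

lemma hsymL_neg (l : List R) {m : ℤ} (h : m < 0) : hsymL l m = 0 := by
  simp [hsymL, not_le.2 h]

lemma hsymL_zero (l : List R) : hsymL l 0 = 1 := by
  rw [hsymL, if_pos le_rfl]
  simp only [Int.toNat_zero, Finset.sym_zero, Finset.sum_singleton]
  rfl

lemma sym_univ_eq (α : Type*) [Fintype α] [DecidableEq α] (n : ℕ) :
    (Finset.univ : Finset α).sym n = Finset.univ := by
  ext s; simp [Finset.mem_sym_iff]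

lemma hsym_succ_sum (N n : ℕ) (g : Fin (N+1) → R) :
    ∑ s ∈ (Finset.univ : Finset (Fin (N+1))).sym (n+1), ((s.1).map g).prod
    = ∑ s ∈ (Finset.univ : Finset (Fin N)).sym (n+1), ((s.1).map (g ∘ Fin.succ)).prod
      + g 0 * ∑ s ∈ (Finset.univ : Finset (Fin (N+1))).sym n, ((s.1).map g).prod := by
  classical
  rw [sym_univ_eq, sym_univ_eq, sym_univ_eq]
  rw [← Finset.sum_filter_add_sum_filter_not Finset.univ (fun s => (0 : Fin (N+1)) ∈ s)]
  rw [add_comm]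
  congr 1
  · -- 0 ∉ s part
    symm
    apply Finset.sum_bij (i := fun (s : Sym (Fin N) (n+1)) _ => s.map Fin.succ)
    · intro a _
      simp only [Finset.mem_filter, Finset.mem_univ, true_and]
      intro h0
      rw [Sym.mem_map] at h0
      obtain ⟨b, _, hb⟩ := h0
      exact Fin.succ_ne_zero b hb
    · intro a _ b _ h
      exact Sym.map_injective (Fin.succ_injective N) _ h
    · intro b hb
      simp only [Finset.mem_filter, Finset.mem_univ, true_and] at hb
      cases N with
      | zero =>
        exfalso
        have hne : b.1 ≠ 0 := by
          intro h0
          have := b.2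
          rw [h0] at this
          simp at this
        obtain ⟨a, ha⟩ := Multiset.exists_mem_of_ne_zero hne
        have : a = 0 := Fin.ext (by omega)
        exact hb (this ▸ ha)
      | succ M =>
        set p : Fin (M+2) → Fin (M+1) := fun a => ⟨a.1 - 1, by omega⟩ with hp
        refine ⟨b.map p, Finset.mem_univ _, ?_⟩
        rw [Sym.map_map]
        apply Sym.coe_injective
        rw [Sym.coe_map]
        have : ∀ a ∈ b.1, (Fin.succ ∘ p) a = a := by
          intro a ha
          have ha0 : a ≠ 0 := fun h => hb (h ▸ ha)
          have : a.1 ≠ 0 := fun h => ha0 (Fin.ext h)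
          simp only [Function.comp_apply, hp, Fin.succ]
          exact Fin.ext (by simp; omega)
        calc Multiset.map (Fin.succ ∘ p) ↑b = Multiset.map id ↑b :=
              Multiset.map_congr rfl this
          _ = ↑b := Multiset.map_id _
    · intro a _
      simp [Sym.coe_map, Multiset.map_map]
  · -- 0 ∈ s part
    rw [Finset.mul_sum]
    symm
    apply Finset.sum_bij (i := fun (s : Sym (Fin (N+1)) n) _ => (0 : Fin (N+1)) ::ₛ s)
    · intro a _
      simp [Sym.mem_cons_self]
    · intro a _ b _ h
      exact (Sym.cons_inj_right _ _ _).1 h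
    · intro b hb
      simp only [Finset.mem_filter, Finset.mem_univ, true_and] at hb
      exact ⟨b.erase 0 hb, Finset.mem_univ _, Sym.cons_erase hb⟩
    · intro a _
      simp [Sym.coe_cons, Multiset.map_cons, Multiset.prod_cons]

lemma hsymL_cons (x : R) (l : List R) (m : ℤ) :
    hsymL (x :: l) m = hsymL l m + x * hsymL (x :: l) (m-1) := by
  rcases lt_trichotomy m 0 with h | h | h
  · rw [hsymL_neg _ h, hsymL_neg _ h, hsymL_neg _ (by omega), mul_zero, add_zero]
  · subst h
    rw [hsymL_zero, hsymL_zero, hsymL_neg _ (by omega), mul_zero, add_zero]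
  · obtain ⟨n, rfl⟩ : ∃ n : ℕ, m = ((n : ℤ) + 1) := ⟨(m-1).toNat, by omega⟩
    have h1 : ((n : ℤ) + 1) - 1 = (n : ℤ) := by ring
    rw [h1]
    rw [hsymL, hsymL, hsymL, if_pos (by positivity), if_pos (by positivity),
      if_pos (by positivity)]
    rw [show ((n : ℤ) + 1).toNat = n + 1 by omega, Int.toNat_natCast]
    have key := hsym_succ_sum l.length n ((x :: l).get)
    have hg : (x :: l).get ∘ Fin.succ = l.get := by funext a; simp
    rw [hg, show (x :: l).get (0 : Fin (l.length+1)) = x from rfl] at key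
    exact key

lemma hsymL_nil {m : ℤ} (h : m ≠ 0) : hsymL ([] : List R) m = 0 := by
  rcases lt_or_gt_of_ne h with h' | h'
  · exact hsymL_neg _ h'
  · rw [hsymL, if_pos (by omega)]
    apply Finset.sum_eq_zero
    intro s _
    exfalso
    have hc : Multiset.card s.1 = m.toNat := s.2
    have : s.1 ≠ 0 := by
      intro h0; rw [h0] at hc; simp at hc; omega
    obtain ⟨a, _⟩ := Multiset.exists_mem_of_ne_zero this
    exact a.elim0

lemma intList_eq (f : ℤ → R) (a b : ℤ) :
    intList f a b = (List.range (b+1-a).toNat).map (fun p : ℕ => f (a + (p:ℤ))) := by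
  unfold intList
  rw [show ((List.range (b+1-a).toNat : List ℕ) : List ℤ)
      = (List.range (b+1-a).toNat).map Nat.cast from List.flatMap_pure_eq_map _ _]
  rw [List.map_map]
  rfl

lemma intList_nil (f : ℤ → R) {a b : ℤ} (h : b < a) : intList f a b = [] := by
  have h0 : (b + 1 - a).toNat = 0 := by omega
  rw [intList_eq, h0]
  simp

lemma intList_cons (f : ℤ → R) {a b : ℤ} (h : a ≤ b) :
    intList f a b = f a :: intList f (a+1) b := by
  rw [intList_eq, intList_eq]
  have h1 : (b + 1 - a).toNat = (b + 1 - (a+1)).toNat + 1 := by omega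
  rw [h1, List.range_succ_eq_map, List.map_cons, List.map_map]
  congr 1
  · norm_num
  · apply List.map_congr_left
    intro p _
    simp only [Function.comp_apply]
    congr 1
    push_cast
    ring

lemma intList_length (f : ℤ → R) (a b : ℤ) :
    (intList f a b).length = (b + 1 - a).toNat := by
  rw [intList_eq]; simp

lemma eI_neg (f : ℤ → R) (a b : ℤ) {m : ℤ} (h : m < 0) : eI f a b m = 0 := esymL_neg _ h

lemma eI_zero (f : ℤ → R) (a b : ℤ) : eI f a b 0 = 1 := esymL_zero _

lemma hI_neg (f : ℤ → R) (a b : ℤ) {m : ℤ} (h : m < 0) : hI f a b m = 0 := hsymL_neg _ h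

lemma hI_zero (f : ℤ → R) (a b : ℤ) : hI f a b 0 = 1 := hsymL_zero _

lemma hI_nil (f : ℤ → R) {a b m : ℤ} (h : b < a) (hm : m ≠ 0) : hI f a b m = 0 := by
  rw [hI, intList_nil f h, hsymL_nil hm]

lemma eI_gt (f : ℤ → R) {a b m : ℤ} (h1 : b + 1 - a < m) (h2 : 0 < m) : eI f a b m = 0 := by
  apply esymL_gt
  rw [intList_length]
  omega

lemma eI_rec (f : ℤ → R) {a b : ℤ} (m : ℤ) (h : a ≤ b) :
    eI f a b m = eI f (a+1) b m + f a * eI f (a+1) b (m-1) := by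
  unfold eI
  rw [intList_cons f h, esymL_cons]

lemma hI_rec (f : ℤ → R) {a b : ℤ} (m : ℤ) (h : a ≤ b) :
    hI f a b m = hI f (a+1) b m + f a * hI f a b (m-1) := by
  unfold hI
  conv_lhs => rw [intList_cons f h, hsymL_cons, ← intList_cons f h]

lemma sum_telescope_Icc (C : ℤ → R) {i j : ℤ} (h : i ≤ j) :
    ∑ t ∈ Finset.Icc i j, (C t - C (t+1)) = C i - C (j+1) := by
  refine Int.le_induction (motive := fun b _ => ∑ t ∈ Finset.Icc i b, (C t - C (t+1)) = C i - C (b+1))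
    (by simp) (fun b hb ih => ?_) j h
  show ∑ t ∈ Finset.Icc i (b+1), (C t - C (t+1)) = C i - C (b+1+1)
  rw [show Finset.Icc i (b+1) = insert (b+1) (Finset.Icc i b) by
        ext t; simp only [Finset.mem_insert, Finset.mem_Icc]; omega,
    Finset.sum_insert (by simp only [Finset.mem_Icc]; omega), ih]
  ring

lemma step_term (α : ℤ → R) {i j k t : ℤ} (hk : 1 ≤ k) (ht1 : i ≤ t) (ht2 : t ≤ j) :
    hI α (t - k) i (t - i) * eI (fun s => -α s) (t - k + 1) (j - 1) (j - t)
    = hI α (t - (k-1)) i (t - i) * eI (fun s => -α s) (t - (k-1) + 1) (j - 1) (j - t)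
      + ((α (t-k) * hI α (t-k) i (t-i-1) * eI (fun s => -α s) (t-k+1) (j-1) (j-t))
        - (α (t+1-k) * hI α (t+1-k) i (t+1-i-1)
            * eI (fun s => -α s) (t+1-k+1) (j-1) (j-(t+1)))) := by
  by_cases hP : t - k ≤ i
  · rw [hI_rec α (t-i) hP]
    by_cases hQ : t - k + 1 ≤ j - 1
    · rw [eI_rec (fun s => -α s) (j-t) hQ]
      have e1 : t - (k-1) = t - k + 1 := by ring
      have e2 : t - (k-1) + 1 = t - k + 1 + 1 := by ring
      have e3 : t + 1 - k = t - k + 1 := by ring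
      have e4 : t + 1 - i - 1 = t - i := by ring
      have e5 : t + 1 - k + 1 = t - k + 1 + 1 := by ring
      have e6 : j - (t + 1) = j - t - 1 := by ring
      rw [e1, e5, e3, e4, e6]
      ring
    · have htj : t = j := by omega
      have hk1 : k = 1 := by omega
      subst htj
      subst hk1
      rw [sub_self t, eI_zero, eI_zero, eI_neg _ _ _ (show t - (t+1) < 0 by omega)]
      ring
  · have h1 : hI α (t-k) i (t-i) = 0 := hI_nil α (by omega) (by omega)
    have h2 : hI α (t-(k-1)) i (t-i) = 0 := hI_nil α (by omega) (by omega)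
    have h3 : hI α (t-k) i (t-i-1) = 0 := hI_nil α (by omega) (by omega)
    have h4 : hI α (t+1-k) i (t+1-i-1) = 0 := hI_nil α (by omega) (by omega)
    rw [h1, h2, h3, h4]
    ring

/-- Proposition 2.6: for i ≤ j,
∑_{t=i}^{j} h_{t−i}(α_{t−k},…,α_i) e_{j−t}(−α_{t−k+1},…,−α_{j−1}) = δ_{ij}. -/
theorem he_identity (α : ℤ → R) (i j k : ℤ) (hij : i ≤ j) :
    (∑ t ∈ Finset.Icc i j,
      hI α (t - k) i (t - i) * eI (fun s => -α s) (t - k + 1) (j - 1) (j - t))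
      = if i = j then 1 else 0 := by
  rcases eq_or_lt_of_le hij with rfl | hlt
  · rw [if_pos rfl, Finset.Icc_self, Finset.sum_singleton, sub_self, hI_zero, eI_zero,
      one_mul]
  · rw [if_neg (ne_of_lt hlt)]
    suffices H : ∀ k : ℤ, (∑ t ∈ Finset.Icc i j,
        hI α (t - k) i (t - i) * eI (fun s => -α s) (t - k + 1) (j - 1) (j - t)) = 0 from H k
    have base : ∀ k : ℤ, k ≤ 0 → (∑ t ∈ Finset.Icc i j,
        hI α (t - k) i (t - i) * eI (fun s => -α s) (t - k + 1) (j - 1) (j - t)) = 0 := by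
      intro k hk
      apply Finset.sum_eq_zero
      intro t ht
      rw [Finset.mem_Icc] at ht
      rcases eq_or_lt_of_le ht.1 with rfl | hti
      · rw [sub_self, hI_zero, one_mul]
        exact eI_gt _ (by omega) (by omega)
      · rw [hI_nil α (by omega) (by omega), zero_mul]
    have steprec : ∀ k : ℤ, 1 ≤ k → (∑ t ∈ Finset.Icc i j,
        hI α (t - k) i (t - i) * eI (fun s => -α s) (t - k + 1) (j - 1) (j - t))
        = (∑ t ∈ Finset.Icc i j,
        hI α (t - (k-1)) i (t - i) * eI (fun s => -α s) (t - (k-1) + 1) (j - 1) (j - t)) := by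
      intro k hk
      have key : ∀ t ∈ Finset.Icc i j,
          hI α (t - k) i (t - i) * eI (fun s => -α s) (t - k + 1) (j - 1) (j - t)
          = hI α (t - (k-1)) i (t - i) * eI (fun s => -α s) (t - (k-1) + 1) (j - 1) (j - t)
            + ((fun u => α (u-k) * hI α (u-k) i (u-i-1)
                * eI (fun s => -α s) (u-k+1) (j-1) (j-u)) t
              - (fun u => α (u-k) * hI α (u-k) i (u-i-1)
                * eI (fun s => -α s) (u-k+1) (j-1) (j-u)) (t+1)) := by
        intro t ht
        rw [Finset.mem_Icc] at ht
        exact step_term α hk ht.1 ht.2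
      rw [Finset.sum_congr rfl key, Finset.sum_add_distrib,
        sum_telescope_Icc (fun u => α (u-k) * hI α (u-k) i (u-i-1)
          * eI (fun s => -α s) (u-k+1) (j-1) (j-u)) (le_of_lt hlt)]
      rw [hI_neg α _ _ (show i - i - 1 < 0 by omega),
        eI_neg _ _ _ (show j - (j+1) < 0 by omega)]
      ring
    have up : ∀ n : ℤ, 0 ≤ n → (∑ t ∈ Finset.Icc i j,
        hI α (t - n) i (t - i) * eI (fun s => -α s) (t - n + 1) (j - 1) (j - t)) = 0 := by
      refine fun n hn => Int.le_induction
        (motive := fun b _ => (∑ t ∈ Finset.Icc i j,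
          hI α (t - b) i (t - i) * eI (fun s => -α s) (t - b + 1) (j - 1) (j - t)) = 0)
        (base 0 le_rfl) (fun m hm ih => ?_) n hn
      show (∑ t ∈ Finset.Icc i j,
        hI α (t - (m+1)) i (t - i) * eI (fun s => -α s) (t - (m+1) + 1) (j - 1) (j - t)) = 0
      rw [steprec (m+1) (by omega), show (m:ℤ)+1-1 = m by ring]
      exact ih
    intro k'
    by_cases h0 : k' ≤ 0
    · exact base k' h0
    · exact up k' (by omega)
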